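/- Let X₁, X₂ and Y be Banach spaces, let X = X₁ ⊕_1 X₂, and let T : X → Y be a bounded linear operator with restrictions T₁ and T₂. If T₁ and T₂ are strong Daugavet operators, then T is a strong Daugavet operator. -/

import Mathlib

/-- A bounded linear operator `T : X → Y` is a *strong Daugavet operator* if for every
`x, y` in the unit sphere of `X` and every `ε > 0` there is `z` in the unit sphere with
`‖x + z‖ ≥ 2 - ε` and `‖T (y - z)‖ ≤ ε`. -/
def IsStrongDaugavet {X Y : Type*} [NormedAddCommGroup X] [NormedSpace ℝ X]
    [NormedAddCommGroup Y] [NormedSpace ℝ Y] (T : X →L[ℝ] Y) : Prop :=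
  ∀ x y : X, ‖x‖ = 1 → ‖y‖ = 1 → ∀ ε : ℝ, 0 < ε →
    ∃ z : X, ‖z‖ = 1 ∧ 2 - ε ≤ ‖x + z‖ ∧ ‖T (y - z)‖ ≤ ε

lemma align {X : Type*} [NormedAddCommGroup X] [NormedSpace ℝ X]
    (u z' : X) (c a δ : ℝ) (hc : 0 ≤ c) (hca : c ≤ a)
    (hu : ‖u‖ = 1) (hδ : 2 - δ ≤ ‖u + z'‖) :
    c + a - a * δ ≤ ‖c • u + a • z'‖ := by
  have key : c • u + a • z' = a • (u + z') - (a - c) • u := by module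
  rw [key]
  have h1 : ‖a • (u + z')‖ - ‖(a - c) • u‖ ≤ ‖a • (u + z') - (a - c) • u‖ :=
    norm_sub_norm_le _ _
  have h2 : ‖a • (u + z')‖ = a * ‖u + z'‖ := by
    rw [norm_smul, Real.norm_eq_abs, abs_of_nonneg (hc.trans hca)]
  have h3 : ‖(a - c) • u‖ = a - c := by
    rw [norm_smul, Real.norm_eq_abs, abs_of_nonneg (by linarith), hu, mul_one]
  nlinarith [norm_nonneg (u + z')]

lemma align' {X : Type*} [NormedAddCommGroup X] [NormedSpace ℝ X]
    (u z' : X) (c a δ : ℝ) (hc : 0 ≤ c) (ha : 0 ≤ a) (hc1 : c ≤ 1) (ha1 : a ≤ 1)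
    (hδ0 : 0 ≤ δ) (hu : ‖u‖ = 1) (hz : ‖z'‖ = 1) (hδ : 2 - δ ≤ ‖u + z'‖) :
    c + a - δ ≤ ‖c • u + a • z'‖ := by
  rcases le_total c a with h | h
  · have := align u z' c a δ hc h hu hδ
    nlinarith
  · have := align z' u a c δ ha h hz (by rwa [add_comm])
    rw [add_comm (a • z')] at this
    nlinarith

lemma coord {X Y : Type*} [NormedAddCommGroup X] [NormedSpace ℝ X]
    [NormedAddCommGroup Y] [NormedSpace ℝ Y]
    (T : X →L[ℝ] Y) (hT : IsStrongDaugavet T) (x y : X)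
    (hx : ‖x‖ ≤ 1) (hy : ‖y‖ ≤ 1) (δ : ℝ) (hδ : 0 < δ) :
    ∃ z : X, ‖z‖ = ‖y‖ ∧ ‖x‖ + ‖y‖ - δ ≤ ‖x + z‖ ∧ ‖T (y - z)‖ ≤ δ := by
  by_cases hy0 : y = 0
  · refine ⟨0, by simp [hy0], ?_, ?_⟩
    · simp only [hy0, norm_zero, add_zero]
      linarith
    · simp only [hy0, sub_zero, map_zero, norm_zero]
      linarith
  have ha : 0 < ‖y‖ := norm_pos_iff.mpr hy0
  have hyu : ‖‖y‖⁻¹ • y‖ = 1 := by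
    rw [norm_smul, Real.norm_eq_abs, abs_of_nonneg (by positivity), inv_mul_cancel₀ ha.ne']
  have key : ∀ z' : X, ‖T (‖y‖⁻¹ • y - z')‖ ≤ δ → ‖T (y - ‖y‖ • z')‖ ≤ δ := by
    intro z' h
    have : y - ‖y‖ • z' = ‖y‖ • (‖y‖⁻¹ • y - z') := by
      rw [smul_sub, smul_inv_smul₀ ha.ne']
    rw [this, map_smul, norm_smul, Real.norm_eq_abs, abs_of_nonneg ha.le]
    calc ‖y‖ * ‖T (‖y‖⁻¹ • y - z')‖ ≤ 1 * δ := by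
          apply mul_le_mul hy h (norm_nonneg _) zero_le_one
      _ = δ := one_mul δ
  by_cases hx0 : x = 0
  · obtain ⟨z', hz'1, _, hz'3⟩ := hT (‖y‖⁻¹ • y) (‖y‖⁻¹ • y) hyu hyu δ hδ
    refine ⟨‖y‖ • z', ?_, ?_, key z' hz'3⟩
    · rw [norm_smul, Real.norm_eq_abs, abs_of_nonneg ha.le, hz'1, mul_one]
    · rw [hx0, zero_add, norm_smul, Real.norm_eq_abs, abs_of_nonneg ha.le, hz'1]
      simp
      linarith
  have hc : 0 < ‖x‖ := norm_pos_iff.mpr hx0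
  have hxu : ‖‖x‖⁻¹ • x‖ = 1 := by
    rw [norm_smul, Real.norm_eq_abs, abs_of_nonneg (by positivity), inv_mul_cancel₀ hc.ne']
  obtain ⟨z', hz'1, hz'2, hz'3⟩ := hT (‖x‖⁻¹ • x) (‖y‖⁻¹ • y) hxu hyu δ hδ
  refine ⟨‖y‖ • z', ?_, ?_, key z' hz'3⟩
  · rw [norm_smul, Real.norm_eq_abs, abs_of_nonneg ha.le, hz'1, mul_one]
  · have hx' : x = ‖x‖ • (‖x‖⁻¹ • x) := (smul_inv_smul₀ hc.ne' x).symm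
    calc ‖x‖ + ‖y‖ - δ ≤ ‖‖x‖ • (‖x‖⁻¹ • x) + ‖y‖ • z'‖ :=
          align' _ _ _ _ δ hc.le ha.le hx hy hδ.le hxu hz'1 hz'2
      _ = ‖x + ‖y‖ • z'‖ := by rw [← hx']

lemma l1norm {α β : Type*} [SeminormedAddCommGroup α] [SeminormedAddCommGroup β]
    (f : WithLp 1 (α × β)) : ‖f‖ = ‖f.fst‖ + ‖f.snd‖ := by
  rw [WithLp.prod_norm_eq_of_nat 1 (by norm_cast) f]
  simp

theorem strongDaugavet_of_restrictions_oneSum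
    {X₁ X₂ Y : Type*}
    [NormedAddCommGroup X₁] [NormedSpace ℝ X₁] [CompleteSpace X₁]
    [NormedAddCommGroup X₂] [NormedSpace ℝ X₂] [CompleteSpace X₂]
    [NormedAddCommGroup Y] [NormedSpace ℝ Y] [CompleteSpace Y]
    (T : WithLp 1 (X₁ × X₂) →L[ℝ] Y)
    (T₁ : X₁ →L[ℝ] Y) (T₂ : X₂ →L[ℝ] Y)
    (hT₁ : ∀ x₁ : X₁, T₁ x₁ = T ((WithLp.prodContinuousLinearEquiv 1 ℝ X₁ X₂).symm (x₁, 0)))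
    (hT₂ : ∀ x₂ : X₂, T₂ x₂ = T ((WithLp.prodContinuousLinearEquiv 1 ℝ X₁ X₂).symm (0, x₂)))
    (h₁ : IsStrongDaugavet T₁) (h₂ : IsStrongDaugavet T₂) :
    IsStrongDaugavet T := by
  set e := WithLp.prodContinuousLinearEquiv 1 ℝ X₁ X₂ with he
  have split : ∀ w : WithLp 1 (X₁ × X₂), T w = T₁ w.fst + T₂ w.snd := by
    intro w
    rw [hT₁, hT₂, ← map_add]
    congr 1
    rw [← map_add]
    have : ((w.fst, 0) : X₁ × X₂) + (0, w.snd) = e w := by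
      simp [he, Prod.ext_iff]
    rw [this, ContinuousLinearEquiv.symm_apply_apply]
  intro x y hx hy ε hε
  have hδ : 0 < ε / 2 := by linarith
  have hx' : ‖x.fst‖ + ‖x.snd‖ = 1 := by rw [← l1norm, hx]
  have hy' : ‖y.fst‖ + ‖y.snd‖ = 1 := by rw [← l1norm, hy]
  obtain ⟨z₁, hz₁n, hz₁x, hz₁T⟩ := coord T₁ h₁ x.fst y.fst
    (by have := norm_nonneg x.snd; linarith) (by have := norm_nonneg y.snd; linarith) _ hδ
  obtain ⟨z₂, hz₂n, hz₂x, hz₂T⟩ := coord T₂ h₂ x.snd y.snd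
    (by have := norm_nonneg x.fst; linarith) (by have := norm_nonneg y.fst; linarith) _ hδ
  refine ⟨e.symm (z₁, z₂), ?_, ?_, ?_⟩
  · rw [l1norm]
    simp only [he, WithLp.prodContinuousLinearEquiv_symm_apply, WithLp.toLp_fst,
      WithLp.toLp_snd]
    rw [hz₁n, hz₂n, hy']
  · rw [l1norm]
    have h1 : (x + e.symm (z₁, z₂)).fst = x.fst + z₁ := rfl
    have h2 : (x + e.symm (z₁, z₂)).snd = x.snd + z₂ := rfl
    rw [h1, h2]
    linarith
  · rw [split]
    have h1 : (y - e.symm (z₁, z₂)).fst = y.fst - z₁ := rfl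
    have h2 : (y - e.symm (z₁, z₂)).snd = y.snd - z₂ := rfl
    rw [h1, h2]
    calc ‖T₁ (y.fst - z₁) + T₂ (y.snd - z₂)‖ ≤ ‖T₁ (y.fst - z₁)‖ + ‖T₂ (y.snd - z₂)‖ :=
          norm_add_le _ _
      _ ≤ ε := by linarith
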